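/- Let p be an odd prime, k > 0, n = 2p^k, and let G be a non-empty circulant graph on n vertices. Then the reduced Euler characteristic of the independence complex Δ(G) is nonzero; more precisely χ̃(Δ(G)) ≡ ±1 (mod p). -/

import Mathlib

/-- Circular distance on `ZMod n`. -/
def circDist (n : ℕ) (a b : ZMod n) : ℕ := min (a - b).val (b - a).val

/-- The circulant graph `C_n(S)`. -/
def circGraph (n : ℕ) (S : Set ℕ) : SimpleGraph (ZMod n) where
  Adj a b := a ≠ b ∧ circDist n a b ∈ S
  symm := by
    constructor; intro a b h
    exact ⟨h.1.symm, by simpa [circDist, min_comm] using h.2⟩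
  loopless := by constructor; intro a h; exact h.1 rfl

/-- `A` is an independent set of `C_n(S)`. -/
def IsIndepSet' (n : ℕ) (S : Set ℕ) (A : Finset (ZMod n)) : Prop :=
  ∀ a ∈ A, ∀ b ∈ A, ¬ (circGraph n S).Adj a b

/-- `A` is a clique of `C_n(S)`. -/
def IsClique' (n : ℕ) (S : Set ℕ) (A : Finset (ZMod n)) : Prop :=
  ∀ a ∈ A, ∀ b ∈ A, a ≠ b → (circGraph n S).Adj a b

/-- The number of independent sets of cardinality `i` (this is `f_{i-1}`). -/
noncomputable def indepCount (n : ℕ) (S : Set ℕ) (i : ℕ) : ℕ :=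
  Nat.card {A : Finset (ZMod n) // A.card = i ∧ IsIndepSet' n S A}

/-- The number of cliques of cardinality `i`. -/
noncomputable def cliqueCount (n : ℕ) (S : Set ℕ) (i : ℕ) : ℕ :=
  Nat.card {A : Finset (ZMod n) // A.card = i ∧ IsClique' n S A}

/-- The reduced Euler characteristic of the independence complex of `C_n(S)`. -/
noncomputable def redEuler (n : ℕ) (S : Set ℕ) : ℤ :=
  ∑ i ∈ Finset.range (n + 1), (-1) ^ (i + 1) * (indepCount n S i : ℤ)

namespace Stmt15Aux

lemma indep_image {n : ℕ} {S : Set ℕ} {A : Finset (ZMod n)} (c : ZMod n)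
    (h : IsIndepSet' n S A) : IsIndepSet' n S (A.image (· + c)) := by
  intro a ha b hb hadj
  obtain ⟨a', ha', rfl⟩ := Finset.mem_image.1 ha
  obtain ⟨b', hb', rfl⟩ := Finset.mem_image.1 hb
  refine h a' ha' b' hb' ⟨fun e => hadj.1 (by rw [e]), ?_⟩
  have h2 : circDist n (a' + c) (b' + c) = circDist n a' b' := by
    simp only [circDist, show a' + c - (b' + c) = a' - b' from by ring,
      show b' + c - (a' + c) = b' - a' from by ring]
  rw [← h2]; exact hadj.2

lemma image_add_add {n : ℕ} (A : Finset (ZMod n)) (c d : ZMod n) :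
    (A.image (· + c)).image (· + d) = A.image (· + (c + d)) := by
  rw [Finset.image_image]; congr 1; funext x; simp [Function.comp, add_assoc]

section Parity

variable {m : ℕ} [NeZero m]

/-- even elements of `ZMod (2*m)` -/
def evens (m : ℕ) [NeZero m] : Finset (ZMod (2 * m)) :=
  haveI : NeZero (2 * m) := ⟨by have := NeZero.ne m; omega⟩
  Finset.univ.filter (fun x => x.val % 2 = 0)

def odds (m : ℕ) [NeZero m] : Finset (ZMod (2 * m)) :=
  haveI : NeZero (2 * m) := ⟨by have := NeZero.ne m; omega⟩
  Finset.univ.filter (fun x => x.val % 2 = 1)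

variable [NeZero (2 * m)]

lemma val_two (hm : 1 < m) : (2 : ZMod (2 * m)).val = 2 := by
  have : ((2 : ℕ) : ZMod (2 * m)).val = 2 % (2 * m) := ZMod.val_natCast (n := 2 * m) 2
  simpa [Nat.mod_eq_of_lt (by omega : 2 < 2 * m)] using this

lemma par_add_two (hm : 1 < m) (x : ZMod (2 * m)) : (x + 2).val % 2 = x.val % 2 := by
  rw [ZMod.val_add, Nat.mod_mod_of_dvd _ ⟨m, rfl⟩, val_two hm]
  omega

lemma par_add_one (x : ZMod (2 * m)) : (x + 1).val % 2 = (x.val + 1) % 2 := by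
  haveI : Fact (1 < 2 * m) := ⟨by have := NeZero.ne m; omega⟩
  rw [ZMod.val_add, Nat.mod_mod_of_dvd _ ⟨m, rfl⟩, ZMod.val_one]

lemma mem_of_invariant (hm : 1 < m) {A : Finset (ZMod (2 * m))}
    (hA : A.image (· + 2) = A) {x : ZMod (2 * m)} (hx : x ∈ A) (j : ℕ) :
    x + 2 * (j : ZMod (2 * m)) ∈ A := by
  induction j with
  | zero => simpa using hx
  | succ j ih =>
      have : (x + 2 * (j : ZMod (2 * m))) + 2 ∈ A := by
        rw [← hA]; exact Finset.mem_image_of_mem _ ih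
      have e : x + 2 * ((j + 1 : ℕ) : ZMod (2 * m)) = (x + 2 * (j : ZMod (2 * m))) + 2 := by
        push_cast; ring
      rwa [e]

lemma mem_of_same_par (hm : 1 < m) {A : Finset (ZMod (2 * m))}
    (hA : A.image (· + 2) = A) {x y : ZMod (2 * m)} (hx : x ∈ A)
    (hpar : y.val % 2 = x.val % 2) : y ∈ A := by
  have hd : y = x + (y - x) := by ring
  have hv : y.val = (x.val + (y - x).val) % (2 * m) := by
    conv_lhs => rw [hd]
    exact ZMod.val_add _ _
  have hv2 : y.val % 2 = (x.val + (y - x).val) % 2 := by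
    rw [hv, Nat.mod_mod_of_dvd _ ⟨m, rfl⟩]
  have heven : (y - x).val % 2 = 0 := by omega
  obtain ⟨j, hj⟩ : ∃ j, (y - x).val = 2 * j := ⟨(y - x).val / 2, by omega⟩
  have : y = x + 2 * (j : ZMod (2 * m)) := by
    have := ZMod.natCast_rightInverse (n := 2 * m) (y - x)
    rw [hd, ← this, hj]
    push_cast; ring
  rw [this]
  exact mem_of_invariant hm hA hx j

lemma classify (hm : 1 < m) {A : Finset (ZMod (2 * m))}
    (hA : A.image (· + 2) = A) :
    A = ∅ ∨ A = evens m ∨ A = odds m ∨ A = Finset.univ := by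
  by_cases he : ∃ x ∈ A, x.val % 2 = 0 <;> by_cases ho : ∃ x ∈ A, x.val % 2 = 1
  · right; right; right
    obtain ⟨xe, hxe, hxe2⟩ := he
    obtain ⟨xo, hxo, hxo2⟩ := ho
    apply Finset.eq_univ_of_forall
    intro y
    rcases Nat.mod_two_eq_zero_or_one y.val with h | h
    · exact mem_of_same_par hm hA hxe (by omega)
    · exact mem_of_same_par hm hA hxo (by omega)
  · right; left
    obtain ⟨xe, hxe, hxe2⟩ := he
    ext y
    simp only [evens, Finset.mem_filter, Finset.mem_univ, true_and]
    constructor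
    · intro hy
      rcases Nat.mod_two_eq_zero_or_one y.val with h | h
      · exact h
      · exact absurd ⟨y, hy, h⟩ ho
    · intro h; exact mem_of_same_par hm hA hxe (by omega)
  · right; right; left
    obtain ⟨xo, hxo, hxo2⟩ := ho
    ext y
    simp only [odds, Finset.mem_filter, Finset.mem_univ, true_and]
    constructor
    · intro hy
      rcases Nat.mod_two_eq_zero_or_one y.val with h | h
      · exact absurd ⟨y, hy, h⟩ he
      · exact h
    · intro h; exact mem_of_same_par hm hA hxo (by omega)
  · left
    ext y
    simp only [Finset.notMem_empty, iff_false]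
    intro hy
    rcases Nat.mod_two_eq_zero_or_one y.val with h | h
    · exact he ⟨y, hy, h⟩
    · exact ho ⟨y, hy, h⟩

lemma odds_eq_image : odds m = (evens m).image (· + 1) := by
  ext y
  simp only [odds, evens, Finset.mem_filter, Finset.mem_univ, true_and, Finset.mem_image]
  constructor
  · intro hy
    refine ⟨y - 1, ⟨?_, by ring⟩⟩
    have := par_add_one (m := m) (y - 1)
    rw [sub_add_cancel] at this
    omega
  · rintro ⟨x, hx2, rfl⟩
    have := par_add_one (m := m) x
    omega

lemma card_evens : (evens m).card = m := by
  have h1 : (odds m).card = (evens m).card := by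
    rw [odds_eq_image, Finset.card_image_of_injective _ (add_left_injective 1)]
  have h2 : (evens m).card + (odds m).card = 2 * m := by
    have : odds m = Finset.univ.filter (fun x : ZMod (2 * m) => ¬ x.val % 2 = 0) := by
      apply Finset.filter_congr
      intro x _
      constructor
      · omega
      · intro h; omega
    rw [evens, this, Finset.card_filter_add_card_filter_not, Finset.card_univ, ZMod.card]
  omega

lemma card_odds : (odds m).card = m := by
  have h1 : (odds m).card = (evens m).card := by
    rw [odds_eq_image, Finset.card_image_of_injective _ (add_left_injective 1)]
  rw [h1, card_evens]

lemma evens_invariant (hm : 1 < m) : (evens m).image (· + 2) = evens m := by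
  apply Finset.eq_of_subset_of_card_le
  · intro y hy
    obtain ⟨x, hx, rfl⟩ := Finset.mem_image.1 hy
    have hx2 := (Finset.mem_filter.1 hx).2
    simp only [evens, Finset.mem_filter, Finset.mem_univ, true_and]
    rw [par_add_two hm]; exact hx2
  · rw [Finset.card_image_of_injective _ (add_left_injective 2)]

lemma odds_invariant (hm : 1 < m) : (odds m).image (· + 2) = odds m := by
  apply Finset.eq_of_subset_of_card_le
  · intro y hy
    obtain ⟨x, hx, rfl⟩ := Finset.mem_image.1 hy
    have hx2 := (Finset.mem_filter.1 hx).2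
    simp only [odds, Finset.mem_filter, Finset.mem_univ, true_and]
    rw [par_add_two hm]; exact hx2
  · rw [Finset.card_image_of_injective _ (add_left_injective 2)]

lemma evens_ne_odds : evens m ≠ odds m := by
  intro h
  have h0 : (0 : ZMod (2 * m)) ∈ evens m := by
    simp [evens, ZMod.val_zero]
  rw [h] at h0
  simp [odds, ZMod.val_zero] at h0

lemma indep_evens_iff_odds {S : Set ℕ} :
    IsIndepSet' (2 * m) S (evens m) ↔ IsIndepSet' (2 * m) S (odds m) := by
  constructor
  · intro h; rw [odds_eq_image]; exact indep_image 1 h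
  · intro h
    have : (odds m).image (· + (-1)) = evens m := by
      rw [odds_eq_image, image_add_add]; simp
    rw [← this]; exact indep_image _ h

end Parity

end Stmt15Aux

namespace Stmt15Aux

abbrev Xt (n : ℕ) (S : Set ℕ) (i : ℕ) := {A : Finset (ZMod n) // A.card = i ∧ IsIndepSet' n S A}

lemma two_val_add (p k : ℕ) [NeZero (p ^ k)] (s t : ZMod (p ^ k)) :
    (2 : ZMod (2 * p ^ k)) * (((s + t).val : ℕ) : ZMod (2 * p ^ k)) =
      2 * ((s.val : ℕ) : ZMod (2 * p ^ k)) + 2 * ((t.val : ℕ) : ZMod (2 * p ^ k)) := by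
  rw [ZMod.val_add]
  have hc := congrArg (fun x : ℕ => (x : ZMod (2 * p ^ k)))
    (Nat.mod_add_div (s.val + t.val) (p ^ k))
  push_cast at hc
  have hz : ((2 * p ^ k : ℕ) : ZMod (2 * p ^ k)) = 0 := ZMod.natCast_self _
  push_cast at hz
  linear_combination 2 * hc - ((((s.val + t.val) / p ^ k : ℕ) : ZMod (2 * p ^ k))) * hz

instance rotAct (p k : ℕ) [NeZero (p ^ k)] (S : Set ℕ) (i : ℕ) :
    MulAction (Multiplicative (ZMod (p ^ k))) (Xt (2 * p ^ k) S i) where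
  smul t A := ⟨A.1.image (· + 2 * ((Multiplicative.toAdd t).val : ZMod (2 * p ^ k))),
    by rw [Finset.card_image_of_injective _ (add_left_injective _)]; exact A.2.1,
    indep_image _ A.2.2⟩
  one_smul A := by
    apply Subtype.ext
    show A.1.image (· + 2 * (((0 : ZMod (p ^ k)).val : ℕ) : ZMod (2 * p ^ k))) = A.1
    simp [ZMod.val_zero]
  mul_smul s t A := by
    apply Subtype.ext
    show A.1.image (· + 2 * (((Multiplicative.toAdd s + Multiplicative.toAdd t).val : ℕ) : ZMod (2 * p ^ k)))
      = (A.1.image (· + 2 * ((Multiplicative.toAdd t).val : ZMod (2 * p ^ k)))).image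
          (· + 2 * ((Multiplicative.toAdd s).val : ZMod (2 * p ^ k)))
    rw [image_add_add, two_val_add, add_comm]

lemma fixed_iff (p k : ℕ) [NeZero (p ^ k)] (hpk : 1 < p ^ k) {S : Set ℕ} {i : ℕ}
    (A : Xt (2 * p ^ k) S i) :
    A ∈ MulAction.fixedPoints (Multiplicative (ZMod (p ^ k))) (Xt (2 * p ^ k) S i) ↔
      A.1.image (· + 2) = A.1 := by
  haveI : Fact (1 < p ^ k) := ⟨hpk⟩
  constructor
  · intro h
    have h1 := h (Multiplicative.ofAdd (1 : ZMod (p ^ k)))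
    have h2 : A.1.image (· + 2 * (((1 : ZMod (p ^ k)).val : ℕ) : ZMod (2 * p ^ k))) = A.1 :=
      Subtype.ext_iff.1 h1
    rwa [ZMod.val_one, Nat.cast_one, mul_one] at h2
  · intro h g
    apply Subtype.ext
    show A.1.image (· + 2 * (((Multiplicative.toAdd g).val : ℕ) : ZMod (2 * p ^ k))) = A.1
    apply Finset.eq_of_subset_of_card_le
    · intro y hy
      obtain ⟨x, hx, rfl⟩ := Finset.mem_image.1 hy
      exact mem_of_invariant hpk h hx _
    · rw [Finset.card_image_of_injective _ (add_left_injective _)]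

lemma count_dvd (p k : ℕ) (hp : p.Prime) (hpk : 1 < p ^ k) (S : Set ℕ) (i : ℕ)
    (h0 : i ≠ 0) (h1 : i ≠ p ^ k) (h2 : i ≠ 2 * p ^ k) :
    p ∣ indepCount (2 * p ^ k) S i := by
  haveI : NeZero (p ^ k) := ⟨by omega⟩
  haveI : NeZero (2 * p ^ k) := ⟨by omega⟩
  haveI : Fact p.Prime := ⟨hp⟩
  have hG : IsPGroup p (Multiplicative (ZMod (p ^ k))) :=
    IsPGroup.of_card (n := k)
      (by rw [Nat.card_eq_fintype_card, Fintype.card_multiplicative, ZMod.card])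
  have hmod := hG.card_modEq_card_fixedPoints (Xt (2 * p ^ k) S i)
  have hempty : IsEmpty
      (MulAction.fixedPoints (Multiplicative (ZMod (p ^ k))) (Xt (2 * p ^ k) S i)) := by
    constructor
    rintro ⟨A, hA⟩
    have hfix := (fixed_iff p k hpk A).1 hA
    rcases classify hpk hfix with h | h | h | h
    · exact h0 (by rw [← A.2.1, h, Finset.card_empty])
    · exact h1 (by rw [← A.2.1, h, card_evens])
    · exact h1 (by rw [← A.2.1, h, card_odds])
    · exact h2 (by rw [← A.2.1, h, Finset.card_univ, ZMod.card])
  have hz : Nat.card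
      (MulAction.fixedPoints (Multiplicative (ZMod (p ^ k))) (Xt (2 * p ^ k) S i)) = 0 :=
    @Nat.card_of_isEmpty _ hempty
  rw [hz] at hmod
  show p ∣ Nat.card (Xt (2 * p ^ k) S i)
  exact Nat.modEq_zero_iff_dvd.1 hmod

end Stmt15Aux

namespace Stmt15Aux

lemma count_pk (p k : ℕ) (hp : p.Prime) (hpk : 1 < p ^ k) (S : Set ℕ) :
    indepCount (2 * p ^ k) S (p ^ k) ≡ 0 [MOD p] ∨
      indepCount (2 * p ^ k) S (p ^ k) ≡ 2 [MOD p] := by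
  haveI : NeZero (p ^ k) := ⟨by omega⟩
  haveI : NeZero (2 * p ^ k) := ⟨by omega⟩
  haveI : Fact p.Prime := ⟨hp⟩
  have hG : IsPGroup p (Multiplicative (ZMod (p ^ k))) :=
    IsPGroup.of_card (n := k)
      (by rw [Nat.card_eq_fintype_card, Fintype.card_multiplicative, ZMod.card])
  have hmod := hG.card_modEq_card_fixedPoints (Xt (2 * p ^ k) S (p ^ k))
  have hcount : indepCount (2 * p ^ k) S (p ^ k) = Nat.card (Xt (2 * p ^ k) S (p ^ k)) := rfl
  by_cases hE : IsIndepSet' (2 * p ^ k) S (evens (p ^ k))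
  · right
    have hO : IsIndepSet' (2 * p ^ k) S (odds (p ^ k)) := indep_evens_iff_odds.1 hE
    set eE : Xt (2 * p ^ k) S (p ^ k) := ⟨evens (p ^ k), card_evens, hE⟩ with heE
    set eO : Xt (2 * p ^ k) S (p ^ k) := ⟨odds (p ^ k), card_odds, hO⟩ with heO
    have hset : MulAction.fixedPoints (Multiplicative (ZMod (p ^ k)))
        (Xt (2 * p ^ k) S (p ^ k)) = {eE, eO} := by
      ext A
      rw [Set.mem_insert_iff, Set.mem_singleton_iff]
      constructor
      · intro hA
        have hfix := (fixed_iff p k hpk A).1 hA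
        rcases classify hpk hfix with h | h | h | h
        · exfalso; have := A.2.1; rw [h, Finset.card_empty] at this; omega
        · left; exact Subtype.ext h
        · right; exact Subtype.ext h
        · exfalso; have := A.2.1
          rw [h, Finset.card_univ, ZMod.card] at this; omega
      · rintro (rfl | rfl)
        · exact (fixed_iff p k hpk eE).2 (evens_invariant hpk)
        · exact (fixed_iff p k hpk eO).2 (odds_invariant hpk)
    have hne : eE ≠ eO := fun h => evens_ne_odds (congrArg Subtype.val h)
    have h2 : Nat.card ({eE, eO} : Set (Xt (2 * p ^ k) S (p ^ k))) = 2 := by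
      rw [Nat.card_coe_set_eq, Set.ncard_pair hne]
    rw [hcount]
    rw [hset, h2] at hmod
    exact hmod
  · left
    have hempty : IsEmpty (MulAction.fixedPoints (Multiplicative (ZMod (p ^ k)))
        (Xt (2 * p ^ k) S (p ^ k))) := by
      constructor
      rintro ⟨A, hA⟩
      have hfix := (fixed_iff p k hpk A).1 hA
      rcases classify hpk hfix with h | h | h | h
      · have := A.2.1; rw [h, Finset.card_empty] at this; omega
      · exact hE (h ▸ A.2.2)
      · exact hE (indep_evens_iff_odds.2 (h ▸ A.2.2))
      · have := A.2.1; rw [h, Finset.card_univ, ZMod.card] at this; omega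
    have hz : Nat.card (MulAction.fixedPoints (Multiplicative (ZMod (p ^ k)))
        (Xt (2 * p ^ k) S (p ^ k))) = 0 := @Nat.card_of_isEmpty _ hempty
    rw [hz] at hmod
    rw [hcount]
    exact hmod

lemma count_zero (n : ℕ) [NeZero n] (S : Set ℕ) : indepCount n S 0 = 1 := by
  haveI : Unique {A : Finset (ZMod n) // A.card = 0 ∧ IsIndepSet' n S A} :=
    { default := ⟨∅, Finset.card_empty, fun a ha => absurd ha (Finset.notMem_empty a)⟩
      uniq := fun A => Subtype.ext (Finset.card_eq_zero.1 A.2.1) }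
  exact Nat.card_unique

lemma count_full (p k : ℕ) (hpk : 1 < p ^ k) (S : Set ℕ) (hS : S ⊆ Set.Icc 1 (p ^ k))
    (hSne : S.Nonempty) : indepCount (2 * p ^ k) S (2 * p ^ k) = 0 := by
  haveI : NeZero (2 * p ^ k) := ⟨by omega⟩
  have hempty : IsEmpty {A : Finset (ZMod (2 * p ^ k)) //
      A.card = 2 * p ^ k ∧ IsIndepSet' (2 * p ^ k) S A} := by
    constructor
    rintro ⟨A, hcard, hind⟩
    have hA : A = Finset.univ := Finset.eq_univ_of_card A (by rw [hcard, ZMod.card])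
    obtain ⟨s, hs⟩ := hSne
    obtain ⟨hs1, hs2⟩ := hS hs
    have hslt : s < 2 * p ^ k := by omega
    have hval : ((s : ℕ) : ZMod (2 * p ^ k)).val = s := ZMod.val_cast_of_lt hslt
    refine hind 0 (hA ▸ Finset.mem_univ _) ((s : ℕ) : ZMod (2 * p ^ k))
      (hA ▸ Finset.mem_univ _) ⟨?_, ?_⟩
    · intro h
      have := congrArg ZMod.val h
      rw [ZMod.val_zero, hval] at this
      omega
    · have hneg : ((0 : ZMod (2 * p ^ k)) - (s : ZMod (2 * p ^ k))) =
          (((2 * p ^ k - s : ℕ)) : ZMod (2 * p ^ k)) := by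
        have hz : ((2 * p ^ k : ℕ) : ZMod (2 * p ^ k)) = 0 := ZMod.natCast_self _
        push_cast [Nat.cast_sub (le_of_lt hslt)] at hz ⊢
        linear_combination -hz
      have hnegval : ((0 : ZMod (2 * p ^ k)) - (s : ZMod (2 * p ^ k))).val = 2 * p ^ k - s := by
        rw [hneg]; exact ZMod.val_cast_of_lt (by omega)
      have hd : circDist (2 * p ^ k) 0 ((s : ℕ) : ZMod (2 * p ^ k)) = s := by
        unfold circDist
        rw [hnegval]
        simp only [sub_zero, hval]
        omega
      rw [hd]; exact hs
  rw [indepCount, @Nat.card_of_isEmpty _ hempty]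

end Stmt15Aux

open Stmt15Aux

theorem stmt15 (p k n : ℕ) (hp : p.Prime) (hodd : Odd p) (hk : 0 < k)
    (hn : n = 2 * p ^ k) (S : Set ℕ) (hS : S ⊆ Set.Icc 1 (p ^ k)) (hSne : S.Nonempty) :
    redEuler n S ≠ 0 ∧
      (redEuler n S ≡ 1 [ZMOD (p : ℤ)] ∨ redEuler n S ≡ -1 [ZMOD (p : ℤ)]) := by
  subst hn
  haveI : Fact p.Prime := ⟨hp⟩
  have hp3 : 3 ≤ p := by
    have h2 := hp.two_le
    rcases hodd with ⟨t, ht⟩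
    omega
  have hpk : 1 < p ^ k := Nat.one_lt_pow (by omega) (by omega)
  haveI : NeZero (2 * p ^ k) := ⟨by omega⟩
  haveI : Fact (1 < p) := ⟨by omega⟩
  have hsub : ({0, p ^ k} : Finset ℕ) ⊆ Finset.range (2 * p ^ k + 1) := by
    intro x hx
    simp only [Finset.mem_insert, Finset.mem_singleton] at hx
    rcases hx with rfl | rfl <;> simp [Finset.mem_range] <;> omega
  have hvanish : ∀ i ∈ Finset.range (2 * p ^ k + 1), i ∉ ({0, p ^ k} : Finset ℕ) →
      ((-1 : ZMod p)) ^ (i + 1) * (indepCount (2 * p ^ k) S i : ZMod p) = 0 := by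
    intro i hi hni
    simp only [Finset.mem_insert, Finset.mem_singleton, not_or] at hni
    rw [Finset.mem_range] at hi
    by_cases hfull : i = 2 * p ^ k
    · rw [hfull, count_full p k hpk S hS hSne]
      simp
    · have hdvd := count_dvd p k hp hpk S i hni.1 hni.2 hfull
      rw [(ZMod.natCast_eq_zero_iff _ _).2 hdvd, mul_zero]
  have hcast : ((redEuler (2 * p ^ k) S : ℤ) : ZMod p) =
      -1 + (indepCount (2 * p ^ k) S (p ^ k) : ZMod p) := by
    rw [redEuler]
    push_cast
    rw [← Finset.sum_subset hsub hvanish]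
    rw [Finset.sum_pair (by omega : (0 : ℕ) ≠ p ^ k)]
    rw [count_zero]
    have heven : (-1 : ZMod p) ^ (p ^ k + 1) = 1 :=
      Even.neg_one_pow (Odd.add_one (hodd.pow))
    rw [heven]
    ring
  rcases count_pk p k hp hpk S with h | h
  · have h0 : (indepCount (2 * p ^ k) S (p ^ k) : ZMod p) = 0 := by
      have := (ZMod.natCast_eq_natCast_iff _ _ _).2 h
      simpa using this
    rw [h0, add_zero] at hcast
    constructor
    · intro hzero
      rw [hzero] at hcast
      simp only [Int.cast_zero] at hcast
      exact one_ne_zero (neg_eq_zero.1 hcast.symm)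
    · right
      rw [← ZMod.intCast_eq_intCast_iff]
      rw [hcast]; push_cast; ring
  · have h2 : (indepCount (2 * p ^ k) S (p ^ k) : ZMod p) = 2 := by
      have := (ZMod.natCast_eq_natCast_iff _ _ _).2 h
      simpa using this
    rw [h2] at hcast
    have hone : ((redEuler (2 * p ^ k) S : ℤ) : ZMod p) = 1 := by rw [hcast]; ring
    constructor
    · intro hzero
      rw [hzero] at hone
      simp only [Int.cast_zero] at hone
      exact one_ne_zero hone.symm
    · left
      rw [← ZMod.intCast_eq_intCast_iff]
      rw [hone]; push_cast; ring
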